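/- arXiv:1908.09497 — 3 statements merged into one kernel-verified Lean document; each statement's English description precedes it below -/
import Mathlib

section
/- Let φ, ψ : [0,1] → ℝ be integrable non-decreasing functions with ∫₀¹ φ = ∫₀¹ ψ and such that ∫₀^t φ ≤ ∫₀^t ψ for all t ∈ [0,1]. Then for every p ∈ [1,∞), ∫₀¹ |ψ − ⟨ψ⟩|^p ≤ ∫₀¹ |φ − ⟨φ⟩|^p, where ⟨·⟩ denotes the average over [0,1]. (This is the Karamata/majorization step used in the truncation lemma.) -/
open MeasureTheory Real Set

/-- Average of `φ` over `[a,b]`. -/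
noncomputable def avg (a b : ℝ) (φ : ℝ → ℝ) : ℝ := (b - a)⁻¹ * ∫ x in a..b, φ x

/-- `p`-mean oscillation of `φ` over `[a,b]`, raised to the power `1/p`. -/
noncomputable def osc (p a b : ℝ) (φ : ℝ → ℝ) : ℝ :=
  ((b - a)⁻¹ * ∫ x in a..b, |φ x - avg a b φ| ^ p) ^ (1 / p)

/-- The `BMO_p` seminorm of `φ` on the interval `[a,b]`. -/
noncomputable def bmoOn (p a b : ℝ) (φ : ℝ → ℝ) : ℝ :=
  sSup {r | ∃ c d, a ≤ c ∧ c < d ∧ d ≤ b ∧ r = osc p c d φ}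

/-- The `BMO_p` seminorm of `φ` on the whole line. -/
noncomputable def bmoR (p : ℝ) (φ : ℝ → ℝ) : ℝ :=
  sSup {r | ∃ c d, c < d ∧ r = osc p c d φ}

open Filter Topology


noncomputable def karg (p u : ℝ) : ℝ :=
  if u < 0 then -(p * (-u) ^ (p - 1)) else p * u ^ (p - 1)

lemma karg_mono {p : ℝ} (hp : 1 ≤ p) : Monotone (karg p) := by
  intro u v huv
  unfold karg
  by_cases hu : u < 0
  · by_cases hv : v < 0
    · simp only [if_pos hu, if_pos hv, neg_le_neg_iff]
      exact mul_le_mul_of_nonneg_left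
        (Real.rpow_le_rpow (by linarith) (by linarith) (by linarith)) (by linarith)
    · simp only [if_pos hu, if_neg hv]
      have h1 : 0 ≤ p * (-u) ^ (p - 1) :=
        mul_nonneg (by linarith) (Real.rpow_nonneg (by linarith) _)
      have h2 : 0 ≤ p * v ^ (p - 1) :=
        mul_nonneg (by linarith) (Real.rpow_nonneg (by linarith [not_lt.1 hv]) _)
      linarith
  · have hv : ¬ v < 0 := fun h => hu (lt_of_le_of_lt huv h)
    simp only [if_neg hu, if_neg hv]
    exact mul_le_mul_of_nonneg_left
      (Real.rpow_le_rpow (not_lt.1 hu) huv (by linarith)) (by linarith)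

lemma karg_pos_side {p : ℝ} (hp : 1 ≤ p) {b : ℝ} (hb : 0 < b) (a : ℝ) :
    b ^ p + p * b ^ (p - 1) * (a - b) ≤ |a| ^ p := by
  have hbp : (0:ℝ) < b ^ p := Real.rpow_pos_of_pos hb p
  have hbq : (0:ℝ) < b ^ (p - 1) := Real.rpow_pos_of_pos hb _
  have hq : b ^ (p - 1) = b ^ p / b := Real.rpow_sub_one hb.ne' p
  by_cases ha : 0 ≤ a
  · have hs : -1 ≤ a / b - 1 := by
      have : 0 ≤ a / b := div_nonneg ha hb.le
      linarith
    have key := one_add_mul_self_le_rpow_one_add hs hp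
    have h1 : (1 + (a / b - 1)) ^ p = a ^ p / b ^ p := by
      rw [show (1 + (a / b - 1)) = a / b by ring, Real.div_rpow ha hb.le]
    rw [h1] at key
    have key2 := mul_le_mul_of_nonneg_right key hbp.le
    rw [div_mul_cancel₀ _ hbp.ne'] at key2
    rw [abs_of_nonneg ha, hq]
    have hb' : b ≠ 0 := hb.ne'
    calc b ^ p + p * (b ^ p / b) * (a - b)
        = (1 + p * (a / b - 1)) * b ^ p := by field_simp
      _ ≤ a ^ p := key2
  · push_neg at ha
    have h0 : 0 ≤ |a| ^ p := Real.rpow_nonneg (abs_nonneg a) p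
    have h2 : p * b ^ (p - 1) * a ≤ 0 :=
      mul_nonpos_of_nonneg_of_nonpos (mul_nonneg (by linarith) hbq.le) ha.le
    have h3 : b ^ (p - 1) * b = b ^ p := by rw [hq]; field_simp
    nlinarith [mul_le_mul_of_nonneg_right (show (1:ℝ) ≤ p from hp) hbp.le]

lemma karg_subgrad {p : ℝ} (hp : 1 ≤ p) (a b : ℝ) :
    |b| ^ p + karg p b * (a - b) ≤ |a| ^ p := by
  rcases lt_trichotomy b 0 with hb | hb | hb
  · have := karg_pos_side hp (neg_pos.2 hb) (-a)
    rw [abs_neg] at this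
    rw [karg, if_pos hb, abs_of_neg hb]
    nlinarith [this]
  · subst hb
    rw [karg, if_neg (lt_irrefl 0), abs_zero, Real.zero_rpow (by positivity), sub_zero]
    rcases eq_or_lt_of_le hp with h1 | h1
    · rw [← h1]
      norm_num [Real.rpow_zero, Real.rpow_one]
      exact le_abs_self a
    · rw [Real.zero_rpow (by linarith : p - 1 ≠ 0)]
      simpa using Real.rpow_nonneg (abs_nonneg a) p
  · rw [karg, if_neg (not_lt.2 hb.le), abs_of_pos hb]
    exact karg_pos_side hp hb a


lemma abel_aux (c G : ℕ → ℝ) (hc : Monotone c) (N : ℕ) (hG : ∀ k ≤ N, 0 ≤ G k)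
    (hG0 : G 0 = 0) :
    ∀ j, j ≤ N → ∑ k ∈ Finset.range j, c k * (G (k + 1) - G k) ≤ c j * G j := by
  intro j
  induction j with
  | zero => intro _; simp [hG0]
  | succ j ih =>
    intro hj
    rw [Finset.sum_range_succ]
    have h1 := ih (by omega)
    have h2 : 0 ≤ G (j + 1) := hG (j + 1) hj
    have h3 : c j ≤ c (j + 1) := hc (Nat.le_succ j)
    nlinarith [mul_nonneg (sub_nonneg.2 h3) h2]

lemma key_le {h : ℝ → ℝ} (hmono : Monotone h) {F : ℝ → ℝ}
    (hFi : IntegrableOn F (Icc (0:ℝ) 1))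
    (hnn : ∀ t ∈ Icc (0:ℝ) 1, 0 ≤ ∫ x in (0:ℝ)..t, F x)
    (hz : (∫ x in (0:ℝ)..1, F x) = 0) :
    (∫ x in (0:ℝ)..1, h x * F x) ≤ 0 := by
  classical
  have hmeas : Measurable h := hmono.measurable
  set M : ℝ := max |h 0| |h 1| with hM
  have hbdd : ∀ u ∈ Icc (0:ℝ) 1, |h u| ≤ M := by
    intro u hu
    rw [abs_le]
    refine ⟨?_, le_trans (le_trans (hmono hu.2) (le_abs_self _)) (le_max_right _ _)⟩
    have h0 : -|h 0| ≤ h 0 := neg_abs_le _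
    have h1 : -M ≤ -|h 0| := neg_le_neg (le_max_left _ _)
    linarith [hmono hu.1]
  set s : ℕ → ℝ → ℝ := fun N x => max 0 (min 1 ((⌊x * (N:ℝ)⌋ : ℝ) / (N:ℝ))) with hs
  have hsmono : ∀ N, Monotone (s N) := by
    intro N u v huv
    have h1 : (⌊u * (N:ℝ)⌋ : ℝ) ≤ (⌊v * (N:ℝ)⌋ : ℝ) := by
      exact_mod_cast Int.floor_le_floor (mul_le_mul_of_nonneg_right huv (Nat.cast_nonneg N))
    exact max_le_max le_rfl (min_le_min le_rfl (div_le_div_of_nonneg_right h1 (Nat.cast_nonneg N)))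
  have hsmem : ∀ N x, s N x ∈ Icc (0:ℝ) 1 :=
    fun N x => ⟨le_max_left _ _, max_le zero_le_one (min_le_left _ _)⟩
  have hsbdd : ∀ N x, |h (s N x)| ≤ M := fun N x => hbdd _ (hsmem N x)
  have hsmeas : ∀ N, Measurable fun x => h (s N x) := fun N => hmeas.comp (hsmono N).measurable
  have hFint : ∀ a b : ℝ, a ∈ Icc (0:ℝ) 1 → b ∈ Icc (0:ℝ) 1 →
      IntervalIntegrable F volume a b := by
    intro a b ha hb
    apply (hFi.mono_set _).intervalIntegrable
    rw [← uIcc_of_le (zero_le_one' ℝ)]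
    exact uIcc_subset_uIcc (by rwa [uIcc_of_le (zero_le_one' ℝ)])
      (by rwa [uIcc_of_le (zero_le_one' ℝ)])
  have hHFint : ∀ (N : ℕ) (a b : ℝ), a ∈ Icc (0:ℝ) 1 → b ∈ Icc (0:ℝ) 1 →
      IntervalIntegrable (fun x => h (s N x) * F x) volume a b := by
    intro N a b ha hb
    rw [intervalIntegrable_iff]
    exact (intervalIntegrable_iff.1 (hFint a b ha hb)).bdd_mul (c := M)
      (hsmeas N).aestronglyMeasurable (ae_of_all _ fun x => by simpa [Real.norm_eq_abs] using hsbdd N x)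
  -- Step 1: for every N ≥ 1, the discretized integral is ≤ 0
  have hstep : ∀ N : ℕ, 1 ≤ N → (∫ x in (0:ℝ)..1, h (s N x) * F x) ≤ 0 := by
    intro N hN
    have hNpos : (0:ℝ) < (N:ℝ) := by exact_mod_cast hN
    set a : ℕ → ℝ := fun k => (k:ℝ) / (N:ℝ) with ha
    have hamem : ∀ k, k ≤ N → a k ∈ Icc (0:ℝ) 1 := by
      intro k hk
      refine ⟨by positivity, ?_⟩
      rw [ha]
      rw [div_le_one hNpos]
      exact_mod_cast hk
    have ha0 : a 0 = 0 := by simp [ha]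
    have haN : a N = 1 := div_self hNpos.ne'
    set G : ℕ → ℝ := fun k => ∫ x in (0:ℝ)..(a k), F x with hG
    have hsum : ∑ k ∈ Finset.range N, (∫ x in a k..a (k+1), h (s N x) * F x)
        = ∫ x in (0:ℝ)..1, h (s N x) * F x := by
      rw [intervalIntegral.sum_integral_adjacent_intervals
        (fun k hk => hHFint N (a k) (a (k+1)) (hamem k hk.le) (hamem (k+1) hk))]
      rw [ha0, haN]
    have hpiece : ∀ k ∈ Finset.range N,
        (∫ x in a k..a (k+1), h (s N x) * F x) = h (a k) * (G (k+1) - G k) := by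
      intro k hk'
      have hk : k < N := Finset.mem_range.1 hk'
      have hle : a k ≤ a (k+1) :=
        div_le_div_of_nonneg_right (by exact_mod_cast Nat.le_succ k) (Nat.cast_nonneg N)
      have h1 : (∫ x in a k..a (k+1), h (s N x) * F x)
          = ∫ x in a k..a (k+1), h (a k) * F x := by
        apply intervalIntegral.integral_congr_ae
        have hne : ∀ᵐ (x:ℝ), x ≠ a (k+1) := by
          rw [ae_iff]
          simp only [not_not, setOf_eq_eq_singleton]
          exact measure_singleton _
        filter_upwards [hne] with x hx hxI
        rw [uIoc_of_le hle] at hxI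
        have hxlt : x < a (k+1) := lt_of_le_of_ne hxI.2 hx
        have hfloor : ⌊x * (N:ℝ)⌋ = (k:ℤ) := by
          rw [Int.floor_eq_iff]
          constructor
          · push_cast
            have := hxI.1
            rw [ha, div_lt_iff₀ hNpos] at this
            linarith
          · rw [ha, lt_div_iff₀ hNpos] at hxlt
            push_cast at hxlt ⊢
            linarith
        have hsx : s N x = a k := by
          rw [hs]
          simp only [hfloor]
          push_cast
          rw [min_eq_right (hamem k hk.le).2, max_eq_right (hamem k hk.le).1]
        rw [hsx]
      rw [h1, intervalIntegral.integral_const_mul]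
      congr 1
      exact (intervalIntegral.integral_interval_sub_left
        (hFint 0 (a (k+1)) ⟨le_rfl, zero_le_one⟩ (hamem (k+1) hk))
        (hFint 0 (a k) ⟨le_rfl, zero_le_one⟩ (hamem k hk.le))).symm
    have hcmono : Monotone fun k : ℕ => h (a k) := by
      intro i j hij
      exact hmono (div_le_div_of_nonneg_right (by exact_mod_cast hij) (Nat.cast_nonneg N))
    have habel := abel_aux (fun k => h (a k)) G hcmono N
      (fun k hk => hnn (a k) (hamem k hk)) (by simp [hG, ha0]) N le_rfl
    have hGN : G N = 0 := by rw [hG]; simp only [haN]; exact hz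
    calc (∫ x in (0:ℝ)..1, h (s N x) * F x)
        = ∑ k ∈ Finset.range N, (∫ x in a k..a (k+1), h (s N x) * F x) := hsum.symm
      _ = ∑ k ∈ Finset.range N, h (a k) * (G (k+1) - G k) := Finset.sum_congr rfl hpiece
      _ ≤ h (a N) * G N := habel
      _ = 0 := by rw [hGN, mul_zero]
  -- Step 2: convergence of the discretized integrals
  have hFI01 : IntegrableOn F (uIoc (0:ℝ) 1) := by
    rw [uIoc_of_le (zero_le_one' ℝ)]
    exact hFi.mono_set Ioc_subset_Icc_self
  have hM0 : 0 ≤ M := le_trans (abs_nonneg _) (le_max_left _ _)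
  have hconv : Tendsto (fun n : ℕ => ∫ x in (0:ℝ)..1, h (s (n+1) x) * F x) atTop
      (𝓝 (∫ x in (0:ℝ)..1, h x * F x)) := by
    apply intervalIntegral.tendsto_integral_filter_of_dominated_convergence
      (bound := fun x => M * |F x|)
    · exact Eventually.of_forall fun n =>
        ((hsmeas (n+1)).aestronglyMeasurable.mul hFI01.aestronglyMeasurable)
    · refine Eventually.of_forall fun n => Eventually.of_forall fun x _ => ?_
      rw [Real.norm_eq_abs, abs_mul]
      exact mul_le_mul_of_nonneg_right (hsbdd (n+1) x) (abs_nonneg _)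
    · apply IntegrableOn.intervalIntegrable
      rw [uIcc_of_le (zero_le_one' ℝ)]
      exact (hFi.abs).const_mul M
    · have hcount : ({x | ¬ContinuousAt h x} ∪ {1} : Set ℝ).Countable :=
        hmono.countable_not_continuousAt.union (countable_singleton 1)
      have hzero := hcount.measure_zero volume
      have hae : ∀ᵐ (x:ℝ), x ∉ ({x | ¬ContinuousAt h x} ∪ {1} : Set ℝ) := by
        rw [ae_iff]
        simpa only [not_notMem, setOf_mem_eq] using hzero
      filter_upwards [hae] with x hx hxI
      rw [uIoc_of_le (zero_le_one' ℝ)] at hxI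
      simp only [mem_union, mem_setOf_eq, mem_singleton_iff, not_or, not_not] at hx
      obtain ⟨hcont, hne1⟩ := hx
      have hx1 : x < 1 := lt_of_le_of_ne hxI.2 hne1
      have hx0 : 0 < x := hxI.1
      have hup : ∀ n : ℕ, s (n+1) x ≤ x := by
        intro n
        have hNp : (0:ℝ) < ((n:ℝ)+1) := by positivity
        have h1 : (⌊x * ((n:ℝ)+1)⌋ : ℝ) / ((n:ℝ)+1) ≤ x := by
          rw [div_le_iff₀ hNp]
          exact Int.floor_le _
        refine max_le hx0.le (le_trans (min_le_right _ _) ?_)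
        push_cast
        convert h1 using 3 <;> push_cast <;> ring
      have hlow : ∀ n : ℕ, x - 1/((n:ℝ)+1) ≤ s (n+1) x := by
        intro n
        have hNp : (0:ℝ) < ((n:ℝ)+1) := by positivity
        refine le_trans ?_ (le_max_right _ _)
        apply le_min
        · have : (0:ℝ) < 1/((n:ℝ)+1) := by positivity
          linarith
        · have h2 : x * ((n:ℝ)+1) - 1 < (⌊x * ((n:ℝ)+1)⌋ : ℝ) := Int.sub_one_lt_floor _
          push_cast
          rw [le_div_iff₀ hNp]
          nlinarith [one_div_mul_cancel hNp.ne']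
      have hseq : Tendsto (fun n : ℕ => s (n+1) x) atTop (𝓝 x) := by
        have hl : Tendsto (fun n : ℕ => x - 1/((n:ℝ)+1)) atTop (𝓝 x) := by
          have h3 : Tendsto (fun _ : ℕ => x) atTop (𝓝 x) := tendsto_const_nhds
          have h4 := h3.sub tendsto_one_div_add_atTop_nhds_zero_nat
          simpa using h4
        exact tendsto_of_tendsto_of_tendsto_of_le_of_le hl tendsto_const_nhds hlow hup
      exact (hcont.tendsto.comp hseq).mul_const (F x)
  exact le_of_tendsto hconv (Eventually.of_forall fun n => hstep (n+1) (Nat.le_add_left 1 n))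

lemma bdd_intervalIntegrable {f : ℝ → ℝ} (hm : Measurable f) (C : ℝ)
    (hC : ∀ x, |f x| ≤ C) : IntervalIntegrable f volume 0 1 := by
  apply IntegrableOn.intervalIntegrable
  rw [uIcc_of_le (zero_le_one' ℝ)]
  exact Measure.integrableOn_of_bounded
    (by rw [Real.volume_Icc]; exact ENNReal.ofReal_ne_top)
    hm.aestronglyMeasurable
    (ae_of_all _ fun x => by simpa [Real.norm_eq_abs] using hC x)

/-- Karamata/majorization step: if `φ, ψ` are non-decreasing on `[0,1]`
with equal integrals and `∫₀ᵗ φ ≤ ∫₀ᵗ ψ` for all `t`, then the `p`-th central moment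
of `ψ` is at most that of `φ`. -/
theorem stmt3 (φ ψ : ℝ → ℝ)
    (hφm : MonotoneOn φ (Icc (0:ℝ) 1)) (hψm : MonotoneOn ψ (Icc (0:ℝ) 1))
    (hφi : IntegrableOn φ (Icc (0:ℝ) 1)) (hψi : IntegrableOn ψ (Icc (0:ℝ) 1))
    (heq : ∫ x in (0:ℝ)..1, φ x = ∫ x in (0:ℝ)..1, ψ x)
    (hmaj : ∀ t ∈ Icc (0:ℝ) 1, ∫ x in (0:ℝ)..t, φ x ≤ ∫ x in (0:ℝ)..t, ψ x)
    (p : ℝ) (hp : 1 ≤ p) :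
    (∫ x in (0:ℝ)..1, |ψ x - avg 0 1 ψ| ^ p)
      ≤ ∫ x in (0:ℝ)..1, |φ x - avg 0 1 φ| ^ p := by
  have hp0 : (0:ℝ) ≤ p := le_trans zero_le_one hp
  have havg : avg 0 1 φ = avg 0 1 ψ := by unfold avg; rw [heq]
  set m := avg 0 1 ψ with hmdef
  rw [havg]
  -- clamped versions
  set c : ℝ → ℝ := fun x => max 0 (min x 1) with hc
  have hcmono : Monotone c := fun u v huv => max_le_max le_rfl (min_le_min huv le_rfl)
  have hcmem : ∀ x, c x ∈ Icc (0:ℝ) 1 :=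
    fun x => ⟨le_max_left _ _, max_le zero_le_one (min_le_right _ _)⟩
  have hceq : ∀ x ∈ Icc (0:ℝ) 1, c x = x := by
    intro x hx
    rw [hc]
    simp only
    rw [min_eq_left hx.2, max_eq_right hx.1]
  set ψc : ℝ → ℝ := fun x => ψ (c x) with hψc
  set φc : ℝ → ℝ := fun x => φ (c x) with hφc
  have hψcm : Monotone ψc := fun u v huv => hψm (hcmem u) (hcmem v) (hcmono huv)
  have hφcm : Monotone φc := fun u v huv => hφm (hcmem u) (hcmem v) (hcmono huv)
  have hψceq : ∀ x ∈ Icc (0:ℝ) 1, ψc x = ψ x := fun x hx => by rw [hψc]; simp only [hceq x hx]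
  have hφceq : ∀ x ∈ Icc (0:ℝ) 1, φc x = φ x := fun x hx => by rw [hφc]; simp only [hceq x hx]
  -- bounds on clamped functions
  have hψlo : ∀ x, ψ 0 ≤ ψc x := fun x => hψm ⟨le_rfl, zero_le_one⟩ (hcmem x) (hcmem x).1
  have hψhi : ∀ x, ψc x ≤ ψ 1 := fun x => hψm (hcmem x) ⟨zero_le_one, le_rfl⟩ (hcmem x).2
  have hφlo : ∀ x, φ 0 ≤ φc x := fun x => hφm ⟨le_rfl, zero_le_one⟩ (hcmem x) (hcmem x).1
  have hφhi : ∀ x, φc x ≤ φ 1 := fun x => hφm (hcmem x) ⟨zero_le_one, le_rfl⟩ (hcmem x).2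
  -- h and F
  set h : ℝ → ℝ := fun x => karg p (ψc x - m) with hh
  have hhmono : Monotone h := fun u v huv => karg_mono hp (sub_le_sub_right (hψcm huv) m)
  set F : ℝ → ℝ := fun x => ψ x - φ x with hF
  have hFi : IntegrableOn F (Icc (0:ℝ) 1) := hψi.sub hφi
  have hsubint : ∀ (f : ℝ → ℝ), IntegrableOn f (Icc (0:ℝ) 1) →
      ∀ t ∈ Icc (0:ℝ) 1, IntervalIntegrable f volume 0 t := by
    intro f hf t ht
    apply IntegrableOn.intervalIntegrable
    rw [uIcc_of_le ht.1]
    exact hf.mono_set (Icc_subset_Icc le_rfl ht.2)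
  have hnn : ∀ t ∈ Icc (0:ℝ) 1, 0 ≤ ∫ x in (0:ℝ)..t, F x := by
    intro t ht
    rw [hF]
    rw [intervalIntegral.integral_sub (hsubint ψ hψi t ht) (hsubint φ hφi t ht)]
    linarith [hmaj t ht]
  have hz : (∫ x in (0:ℝ)..1, F x) = 0 := by
    rw [hF]
    rw [intervalIntegral.integral_sub (hsubint ψ hψi 1 ⟨zero_le_one, le_rfl⟩)
      (hsubint φ hφi 1 ⟨zero_le_one, le_rfl⟩)]
    rw [heq]
    ring
  have key := key_le hhmono hFi hnn hz
  -- bound for h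
  set Ch : ℝ := max |karg p (ψ 0 - m)| |karg p (ψ 1 - m)| with hCh
  have hhbdd : ∀ x, |h x| ≤ Ch := by
    intro x
    rw [abs_le]
    constructor
    · have h1 : karg p (ψ 0 - m) ≤ h x := karg_mono hp (sub_le_sub_right (hψlo x) m)
      have h2 : -Ch ≤ -|karg p (ψ 0 - m)| := neg_le_neg (le_max_left _ _)
      linarith [neg_abs_le (karg p (ψ 0 - m))]
    · have h1 : h x ≤ karg p (ψ 1 - m) := karg_mono hp (sub_le_sub_right (hψhi x) m)
      exact le_trans (le_trans h1 (le_abs_self _)) (le_max_right _ _)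
  -- integrability of the three integrands
  have hAmeas : ∀ (g : ℝ → ℝ), Monotone g → Measurable fun x => |g x - m| ^ p := by
    intro g hg
    exact (Real.continuous_rpow_const hp0).measurable.comp
      ((hg.measurable.sub measurable_const).abs)
  have hbnd : ∀ (g : ℝ → ℝ) (lo hi : ℝ), (∀ x, lo ≤ g x) → (∀ x, g x ≤ hi) →
      ∀ x, |(|g x - m| ^ p)| ≤ (|lo| + |hi| + |m|) ^ p := by
    intro g lo hi hlo hhi x
    rw [abs_of_nonneg (Real.rpow_nonneg (abs_nonneg _) _)]
    apply Real.rpow_le_rpow (abs_nonneg _) _ hp0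
    have h1 : |g x| ≤ |lo| + |hi| := by
      rw [abs_le]
      constructor
      · linarith [neg_abs_le lo, hlo x, abs_nonneg hi]
      · linarith [le_abs_self hi, hhi x, abs_nonneg lo]
    have h2 : |g x - m| ≤ |g x| + |m| := by
      rw [sub_eq_add_neg]
      exact le_trans (abs_add_le _ _) (by rw [abs_neg])
    linarith
  have iA : IntervalIntegrable (fun x => |ψc x - m| ^ p) volume 0 1 :=
    bdd_intervalIntegrable (hAmeas ψc hψcm) _ (hbnd ψc (ψ 0) (ψ 1) hψlo hψhi)
  have iB : IntervalIntegrable (fun x => |φc x - m| ^ p) volume 0 1 :=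
    bdd_intervalIntegrable (hAmeas φc hφcm) _ (hbnd φc (φ 0) (φ 1) hφlo hφhi)
  have iC : IntervalIntegrable (fun x => h x * F x) volume 0 1 := by
    rw [intervalIntegrable_iff]
    exact (intervalIntegrable_iff.1 (hsubint F hFi 1 ⟨zero_le_one, le_rfl⟩)).bdd_mul (c := Ch)
      hhmono.measurable.aestronglyMeasurable
      (ae_of_all _ fun x => by simpa [Real.norm_eq_abs] using hhbdd x)
  -- rewrite goal in terms of clamped functions
  have e1 : (∫ x in (0:ℝ)..1, |ψ x - m| ^ p) = ∫ x in (0:ℝ)..1, |ψc x - m| ^ p := by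
    apply intervalIntegral.integral_congr
    intro x hx
    rw [uIcc_of_le (zero_le_one' ℝ)] at hx
    show |ψ x - m| ^ p = |ψc x - m| ^ p
    rw [hψceq x hx]
  have e2 : (∫ x in (0:ℝ)..1, |φ x - m| ^ p) = ∫ x in (0:ℝ)..1, |φc x - m| ^ p := by
    apply intervalIntegral.integral_congr
    intro x hx
    rw [uIcc_of_le (zero_le_one' ℝ)] at hx
    show |φ x - m| ^ p = |φc x - m| ^ p
    rw [hφceq x hx]
  rw [e1, e2]
  -- pointwise inequality
  have hpt : ∀ x ∈ Icc (0:ℝ) 1, |ψc x - m| ^ p ≤ |φc x - m| ^ p + h x * F x := by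
    intro x hx
    have hsg := karg_subgrad hp (φc x - m) (ψc x - m)
    have hFx : F x = ψc x - φc x := by rw [hF, hψceq x hx, hφceq x hx]
    have hhx : h x = karg p (ψc x - m) := rfl
    rw [hFx, hhx]
    nlinarith [hsg]
  calc (∫ x in (0:ℝ)..1, |ψc x - m| ^ p)
      ≤ ∫ x in (0:ℝ)..1, (|φc x - m| ^ p + h x * F x) :=
        intervalIntegral.integral_mono_on zero_le_one iA (iB.add iC) hpt
    _ = (∫ x in (0:ℝ)..1, |φc x - m| ^ p) + ∫ x in (0:ℝ)..1, h x * F x :=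
        intervalIntegral.integral_add iB iC
    _ ≤ ∫ x in (0:ℝ)..1, |φc x - m| ^ p := by linarith [key]
end

section
/- Let r ∈ ℕ, λ ∈ (0,1). Suppose an interval J ⊂ ℝ contains at least r consecutive intervals of a partition in which the ratio of lengths of any two neighbors is between λ and λ⁻¹, and let I', I'' be the (at most two) partition intervals containing the endpoints of J. Then (|J ∩ I'| + |J ∩ I''|)/|J| ≤ 2/(1 + λ + λ² + ⋯ + λ^{r−1}) = 2(1−λ)/(1−λ^r). -/
/-- for a partition of `ℝ` into intervals `[t k, t (k+1)]`, `k ∈ ℤ`, in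
which the lengths of neighboring intervals have ratio between `λ` and `λ⁻¹`, if the
interval `J = [a,b]` entirely covers at least `r` partition intervals, and its endpoints
lie in the partition intervals `[t m, t (m+1)]` and `[t n, t (n+1)]`, then the fraction
of `J` taken by these two endpoint intervals is at most
`2/(1 + λ + ⋯ + λ^{r-1}) = 2(1-λ)/(1-λ^r)`. -/
theorem stmt11 (r : ℕ) (hr : 1 ≤ r) (l : ℝ) (hl0 : 0 < l) (hl1 : l < 1)
    (t : ℤ → ℝ) (hmono : StrictMono t)
    (hratio : ∀ k : ℤ, l ≤ (t (k + 1) - t k) / (t (k + 2) - t (k + 1)) ∧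
      (t (k + 1) - t k) / (t (k + 2) - t (k + 1)) ≤ l⁻¹)
    (a b : ℝ) (m n : ℤ)
    (ha : t m ≤ a) (ha' : a < t (m + 1)) (hb : t n < b) (hb' : b ≤ t (n + 1))
    (hlong : (r : ℤ) ≤ n - (m + 1)) :
    ((t (m + 1) - a) + (b - t n)) / (b - a) ≤ 2 * (1 - l) / (1 - l ^ r) := by
  have hd : ∀ k : ℤ, 0 < t (k + 1) - t k := fun k => sub_pos.2 (hmono (by omega))
  -- step inequalities
  have hstep1 : ∀ k : ℤ, l * (t (k + 1) - t k) ≤ t (k + 2) - t (k + 1) := by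
    intro k
    have hp : 0 < t (k + 2) - t (k + 1) := sub_pos.2 (hmono (by omega))
    have h := (hratio k).2
    rw [div_le_iff₀ hp] at h
    have h2 : l * (t (k + 1) - t k) ≤ l * (l⁻¹ * (t (k + 2) - t (k + 1))) :=
      mul_le_mul_of_nonneg_left h hl0.le
    rwa [← mul_assoc, mul_inv_cancel₀ hl0.ne', one_mul] at h2
  have hstep2 : ∀ k : ℤ, l * (t (k + 2) - t (k + 1)) ≤ t (k + 1) - t k := by
    intro k
    have hp : 0 < t (k + 2) - t (k + 1) := sub_pos.2 (hmono (by omega))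
    have h := (hratio k).1
    rw [le_div_iff₀ hp] at h
    linarith
  set A := t (m + 1) - a with hA
  set B := b - t n with hB
  have hApos : 0 < A := sub_pos.2 ha'
  have hBpos : 0 < B := sub_pos.2 hb
  -- forward chain of interval lengths
  have hc1 : ∀ j : ℕ, l ^ (j + 1) * A ≤ t (m + 1 + j + 1) - t (m + 1 + j) := by
    intro j
    induction j with
    | zero =>
      have h1 : l * A ≤ l * (t (m + 1) - t m) := by
        have : A ≤ t (m + 1) - t m := by simp [hA]; linarith
        nlinarith
      have h2 := hstep1 m
      have e : (m : ℤ) + 1 + (0 : ℕ) + 1 = m + 2 := by push_cast; ring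
      have e2 : (m : ℤ) + 1 + (0 : ℕ) = m + 1 := by push_cast; ring
      rw [e, e2]
      calc l ^ (0 + 1) * A = l * A := by ring
        _ ≤ l * (t (m + 1) - t m) := h1
        _ ≤ t (m + 2) - t (m + 1) := h2
      | succ j ih =>
      have h2 := hstep1 (m + 1 + j)
      have e1 : (m : ℤ) + 1 + (j : ℕ) + 1 = m + 1 + ((j : ℤ) + 1) := by push_cast; ring
      have e2 : (m : ℤ) + 1 + ((j : ℤ) + 1) + 1 = m + 1 + (j : ℤ) + 2 := by ring
      have e3 : (m : ℤ) + 1 + ((j + 1 : ℕ) : ℤ) = m + 1 + (j : ℤ) + 1 := by push_cast; ring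
      rw [e3, show (m : ℤ) + 1 + (j : ℤ) + 1 + 1 = m + 1 + (j : ℤ) + 2 from by ring]
      calc l ^ (j + 1 + 1) * A = l * (l ^ (j + 1) * A) := by ring
        _ ≤ l * (t (m + 1 + j + 1) - t (m + 1 + j)) := mul_le_mul_of_nonneg_left ih hl0.le
        _ ≤ t (m + 1 + (j : ℤ) + 2) - t (m + 1 + (j : ℤ) + 1) := h2
  -- backward chain of interval lengths
  have hc2 : ∀ j : ℕ, l ^ (j + 1) * B ≤ t (n - j) - t (n - j - 1) := by
    intro j
    induction j with
    | zero =>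
      have h1 : l * B ≤ l * (t (n + 1) - t n) := by
        have : B ≤ t (n + 1) - t n := by simp [hB]; linarith
        nlinarith
      have h2 := hstep2 (n - 1)
      have e : (n : ℤ) - 1 + 2 = n + 1 := by ring
      have e2 : (n : ℤ) - 1 + 1 = n := by ring
      rw [e, e2] at h2
      have e3 : (n : ℤ) - (0 : ℕ) = n := by push_cast; ring
      rw [e3]
      calc l ^ (0 + 1) * B = l * B := by ring
        _ ≤ l * (t (n + 1) - t n) := h1
        _ ≤ t n - t (n - 1) := h2
    | succ j ih =>
      have h2 := hstep2 (n - j - 2)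
      have e : (n : ℤ) - j - 2 + 2 = n - j := by ring
      have e2 : (n : ℤ) - j - 2 + 1 = n - j - 1 := by ring
      rw [e, e2] at h2
      have e3 : (n : ℤ) - ((j + 1 : ℕ) : ℤ) = n - (j : ℤ) - 1 := by push_cast; ring
      rw [e3, show (n : ℤ) - (j : ℤ) - 1 - 1 = n - (j : ℤ) - 2 from by ring]
      calc l ^ (j + 1 + 1) * B = l * (l ^ (j + 1) * B) := by ring
        _ ≤ l * (t (n - j) - t (n - j - 1)) := mul_le_mul_of_nonneg_left ih hl0.le
        _ ≤ t (n - (j : ℤ) - 1) - t (n - (j : ℤ) - 2) := h2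
  -- accumulated forward sums
  have hfwd : ∀ j : ℕ, A * (∑ i ∈ Finset.range (j + 1), l ^ i) ≤ t (m + 1 + j) - a := by
    intro j
    induction j with
    | zero => simp [hA]
    | succ j ih =>
      have h1 := hc1 j
      have e3 : (m : ℤ) + 1 + ((j + 1 : ℕ) : ℤ) = m + 1 + (j : ℤ) + 1 := by push_cast; ring
      rw [e3]
      rw [Finset.sum_range_succ]
      calc A * ((∑ i ∈ Finset.range (j + 1), l ^ i) + l ^ (j + 1))
          = A * (∑ i ∈ Finset.range (j + 1), l ^ i) + l ^ (j + 1) * A := by ring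
        _ ≤ (t (m + 1 + j) - a) + (t (m + 1 + j + 1) - t (m + 1 + j)) := by linarith
        _ = t (m + 1 + (j : ℤ) + 1) - a := by ring
  -- accumulated backward sums
  have hbwd : ∀ j : ℕ, B * (∑ i ∈ Finset.range (j + 1), l ^ i) ≤ b - t (n - j) := by
    intro j
    induction j with
    | zero => simp [hB]
    | succ j ih =>
      have h1 := hc2 j
      have e3 : (n : ℤ) - ((j + 1 : ℕ) : ℤ) = n - (j : ℤ) - 1 := by push_cast; ring
      rw [e3]
      rw [Finset.sum_range_succ]
      calc B * ((∑ i ∈ Finset.range (j + 1), l ^ i) + l ^ (j + 1))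
          = B * (∑ i ∈ Finset.range (j + 1), l ^ i) + l ^ (j + 1) * B := by ring
        _ ≤ (b - t (n - j)) + (t (n - j) - t (n - j - 1)) := by linarith
        _ = b - t (n - (j : ℤ) - 1) := by ring
  -- specialize to j = r - 1
  set S := ∑ i ∈ Finset.range r, l ^ i with hS
  have hSpos : 0 < S := by
    rw [hS]
    apply Finset.sum_pos (fun i _ => pow_pos hl0 i)
    exact Finset.nonempty_range_iff.2 (by omega)
  have hba : 0 < b - a := by
    have h1 : t (m + 1) ≤ t n := hmono.le_iff_le.2 (by omega)
    linarith
  have hAS : A * S ≤ b - a := by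
    have := hfwd (r - 1)
    rw [show r - 1 + 1 = r from by omega] at this
    have hle : t (m + 1 + ((r - 1 : ℕ) : ℤ)) ≤ t n := by
      apply hmono.le_iff_le.2
      omega
    linarith
  have hBS : B * S ≤ b - a := by
    have := hbwd (r - 1)
    rw [show r - 1 + 1 = r from by omega] at this
    have hle : t (m + 1) ≤ t (n - ((r - 1 : ℕ) : ℤ)) := by
      apply hmono.le_iff_le.2
      omega
    linarith
  have hlr : 0 < 1 - l ^ r := by
    have := pow_lt_one₀ hl0.le hl1 (show r ≠ 0 by omega)
    linarith
  have hgeom : S * (1 - l) = 1 - l ^ r := by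
    have := geom_sum_mul l r
    rw [hS]
    nlinarith [this]
  rw [div_le_div_iff₀ hba hlr]
  have key : (A + B) * S ≤ 2 * (b - a) := by linarith
  nlinarith [mul_le_mul_of_nonneg_right key (by linarith : (0:ℝ) ≤ 1 - l)]
end

section
/- Let φ = χ_{[0,1]} − χ_{[−1,0]} on I = [−1,1]. Then ⟨φ⟩_I = 0, ‖φ‖_{2,I} = 1, and for λ ≤ 1 we have |{x ∈ I : |φ(x) − ⟨φ⟩_I| ≥ λ}|/|I| = 1, which shows the first case of the sharp weak-type John–Nirenberg estimate (the bound 1 for λ ≤ ‖φ‖_{2,I}) is attained. -/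
open MeasureTheory Real Set

private lemma phi_mono : Monotone (fun x : ℝ => if 0 ≤ x then (1:ℝ) else -1) := by
  intro x y hxy
  dsimp only
  split_ifs with hx hy
  · exact le_refl _
  · exact absurd (hx.trans hxy) hy
  · norm_num
  · exact le_refl _

private lemma phi_ii (a b : ℝ) :
    IntervalIntegrable (fun x : ℝ => if 0 ≤ x then (1:ℝ) else -1) volume a b :=
  phi_mono.intervalIntegrable

private lemma phi_int (c d : ℝ) (hc : c ≤ 0) (hd : 0 ≤ d) :
    ∫ x in c..d, (if 0 ≤ x then (1:ℝ) else -1) = c + d := by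
  have h1 : ∫ x in (0:ℝ)..d, (if 0 ≤ x then (1:ℝ) else -1) = d := by
    rw [intervalIntegral.integral_congr (g := fun _ => (1:ℝ))]
    · simp
    · intro x hx
      rw [uIcc_of_le hd] at hx
      simp [hx.1]
  have h0 : ∀ᵐ x ∂(volume : Measure ℝ), x ≠ 0 := by
    rw [ae_iff]
    simp only [ne_eq, not_not]
    simpa using Real.volume_singleton (x := 0)
  have h2 : ∫ x in c..0, (if 0 ≤ x then (1:ℝ) else -1) = c := by
    rw [intervalIntegral.integral_congr_ae (g := fun _ => (-1:ℝ)) ?_]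
    · simp
    · filter_upwards [h0] with x hx hmem
      rw [Set.mem_uIoc] at hmem
      have hxlt : x < 0 := by
        rcases hmem with ⟨_, h⟩ | ⟨h1', h2'⟩
        · exact lt_of_le_of_ne h hx
        · linarith
      simp [not_le.mpr hxlt]
  rw [← intervalIntegral.integral_add_adjacent_intervals (phi_ii c 0) (phi_ii 0 d), h1, h2]

private lemma osc_eq (c d : ℝ) (h : c < d) :
    osc 2 c d (fun x => if 0 ≤ x then (1:ℝ) else -1)
      = (1 - (avg c d (fun x => if 0 ≤ x then (1:ℝ) else -1))^2) ^ ((1:ℝ)/2) := by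
  set m := avg c d (fun x => if 0 ≤ x then (1:ℝ) else -1) with hm
  have key : ∀ x : ℝ, |(if 0 ≤ x then (1:ℝ) else -1) - m| ^ (2:ℝ)
      = (1 + m^2) - (2*m) * (if 0 ≤ x then (1:ℝ) else -1) := by
    intro x
    rw [show ((2:ℝ)) = ((2:ℕ):ℝ) by norm_num, Real.rpow_natCast, sq_abs]
    split_ifs <;> ring
  have hint : ∫ x in c..d, |(if 0 ≤ x then (1:ℝ) else -1) - m| ^ (2:ℝ)
      = (1 + m^2) * (d - c) - (2*m) * ∫ x in c..d, (if 0 ≤ x then (1:ℝ) else -1) := by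
    simp only [key]
    rw [intervalIntegral.integral_sub intervalIntegrable_const ((phi_ii c d).const_mul _)]
    rw [intervalIntegral.integral_const, intervalIntegral.integral_const_mul]
    simp only [smul_eq_mul]
    ring
  have hdc : (d - c) ≠ 0 := by linarith
  have hmj : (d - c)⁻¹ * ∫ x in c..d, (if 0 ≤ x then (1:ℝ) else -1) = m := rfl
  have hJ : (∫ x in c..d, (if 0 ≤ x then (1:ℝ) else -1)) = (d - c) * m := by
    rw [hm]; unfold avg; field_simp
  unfold osc
  rw [hint, hJ]
  congr 1
  field_simp
  ring

private lemma avg_main : avg (-1) 1 (fun x => if 0 ≤ x then (1:ℝ) else -1) = 0 := by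
  unfold avg
  rw [phi_int (-1) 1 (by norm_num) (by norm_num)]
  norm_num

private lemma sq_avg_le (c d : ℝ) (h : c < d) :
    (avg c d (fun x => if 0 ≤ x then (1:ℝ) else -1))^2 ≤ 1 := by
  set m := avg c d (fun x => if 0 ≤ x then (1:ℝ) else -1) with hm
  have habs : |m| ≤ 1 := by
    rw [hm]
    unfold avg
    rw [abs_mul, abs_inv]
    have h1 : |∫ x in c..d, (if 0 ≤ x then (1:ℝ) else -1)| ≤ (d - c) := by
      have := intervalIntegral.abs_integral_le_integral_abs (μ := volume)
        (f := fun x => if 0 ≤ x then (1:ℝ) else -1) (le_of_lt h)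
      refine this.trans ?_
      have : ∫ x in c..d, |if 0 ≤ x then (1:ℝ) else -1| = ∫ x in c..d, (1:ℝ) := by
        apply intervalIntegral.integral_congr
        intro x _
        dsimp only
        split_ifs <;> norm_num
      rw [this]; simp
    rw [abs_of_pos (by linarith : (0:ℝ) < d - c)]
    calc (d - c)⁻¹ * |∫ x in c..d, (if 0 ≤ x then (1:ℝ) else -1)|
        ≤ (d - c)⁻¹ * (d - c) := by
          apply mul_le_mul_of_nonneg_left h1
            (inv_nonneg.mpr (by linarith))
      _ = 1 := inv_mul_cancel₀ (by linarith)
  calc m^2 = |m|^2 := (sq_abs m).symm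
    _ ≤ 1^2 := by nlinarith [abs_nonneg m]
    _ = 1 := one_pow 2

private lemma osc_le_one (c d : ℝ) (h : c < d) :
    osc 2 c d (fun x => if 0 ≤ x then (1:ℝ) else -1) ≤ 1 := by
  rw [osc_eq c d h]
  apply Real.rpow_le_one
  · nlinarith [sq_avg_le c d h]
  · nlinarith [sq_avg_le c d h]
  · norm_num

private lemma osc_main : osc 2 (-1) 1 (fun x => if 0 ≤ x then (1:ℝ) else -1) = 1 := by
  rw [osc_eq (-1) 1 (by norm_num), avg_main]
  norm_num


/-- for `φ = χ_{[0,1]} - χ_{[-1,0]}` on `I = [-1,1]`, the average over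
`I` is `0`, `‖φ‖_{2,I} = 1`, and for `0 < λ ≤ 1` the normalized measure of the level
set `{|φ - ⟨φ⟩_I| ≥ λ}` equals `1`: the first case of the sharp weak-type
John–Nirenberg estimate is attained. -/
theorem stmt14 :
    avg (-1) 1 (fun x => if 0 ≤ x then (1:ℝ) else -1) = 0 ∧
    bmoOn 2 (-1) 1 (fun x => if 0 ≤ x then (1:ℝ) else -1) = 1 ∧
    ∀ lam : ℝ, 0 < lam → lam ≤ 1 →
      (volume {x ∈ Icc (-1:ℝ) 1 |
        lam ≤ |(if 0 ≤ x then (1:ℝ) else -1) -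
          avg (-1) 1 (fun x => if 0 ≤ x then (1:ℝ) else -1)|}).toReal / 2 = 1 := by
  refine ⟨avg_main, ?_, ?_⟩
  · unfold bmoOn
    apply le_antisymm
    · apply Real.sSup_le
      · rintro r ⟨c, d, hc, hcd, hd, rfl⟩
        exact osc_le_one c d hcd
      · norm_num
    · apply le_csSup
      · exact ⟨1, fun r ⟨c, d, hc, hcd, hd, hr⟩ => hr ▸ osc_le_one c d hcd⟩
      · exact ⟨-1, 1, le_refl _, by norm_num, le_refl _, osc_main.symm⟩
  · intro lam hl hl1
    have hset : {x ∈ Icc (-1:ℝ) 1 |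
        lam ≤ |(if 0 ≤ x then (1:ℝ) else -1) -
          avg (-1) 1 (fun x => if 0 ≤ x then (1:ℝ) else -1)|} = Icc (-1:ℝ) 1 := by
      ext x
      simp only [Set.mem_setOf_eq, Set.mem_sep_iff, avg_main, sub_zero]
      constructor
      · exact fun hx => hx.1
      · intro hx
        refine ⟨hx, ?_⟩
        split_ifs <;> simpa using hl1
    rw [hset, Real.volume_Icc]
    norm_num
end
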